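/- Special case α = 2: for z ∈ ℝ^M, if z_μ - max_{ν≠μ} z_ν ≥ 1, then Sparsemax(z) = e_μ, where Sparsemax(z) = argmin_{p ∈ Δ^M} ‖p - z‖² is the Euclidean projection of z onto the probability simplex Δ^M. -/
import Mathlib


open scoped BigOperators

/-- squared Euclidean distance on `Fin n → ℝ` -/
def sqDist {n : ℕ} (u v : Fin n → ℝ) : ℝ := ∑ i, (u i - v i) ^ 2

theorem stmt8 {M : ℕ} (z : Fin M → ℝ) (μ : Fin M)
    (hmargin : ∀ ν, ν ≠ μ → z μ - z ν ≥ 1) :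
    {p ∈ stdSimplex ℝ (Fin M) |
        ∀ q ∈ stdSimplex ℝ (Fin M), sqDist p z ≤ sqDist q z}
      = {Pi.single μ 1} := by
  have hmem : Pi.single μ 1 ∈ stdSimplex ℝ (Fin M) := by
    constructor
    · intro i
      rcases eq_or_ne i μ with h | h
      · subst h; simp
      · simp [Pi.single_eq_of_ne h]
    · simp
  have key : ∀ q ∈ stdSimplex ℝ (Fin M),
      sqDist (Pi.single μ 1) z + ∑ i, (q i - (Pi.single μ 1 : Fin M → ℝ) i) ^ 2 ≤ sqDist q z := by
    intro q hq
    have hsum : ∑ i, q i = 1 := hq.2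
    have hpos : ∀ i, 0 ≤ q i := hq.1
    have hSsum : q μ + ∑ i ∈ Finset.univ.erase μ, q i = 1 := by
      rw [Finset.add_sum_erase _ _ (Finset.mem_univ μ)]; exact hsum
    have cross : 0 ≤ ∑ i, ((Pi.single μ 1 : Fin M → ℝ) i - z i) * (q i - (Pi.single μ 1 : Fin M → ℝ) i) := by
      rw [← Finset.add_sum_erase _ _ (Finset.mem_univ μ)]
      have h1 : ∑ i ∈ Finset.univ.erase μ,
          ((Pi.single μ 1 : Fin M → ℝ) i - z i) * (q i - (Pi.single μ 1 : Fin M → ℝ) i)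
          = ∑ i ∈ Finset.univ.erase μ, q i * (z μ - 1 - z i)
            - ∑ i ∈ Finset.univ.erase μ, q i * (z μ - 1) := by
        rw [← Finset.sum_sub_distrib]
        apply Finset.sum_congr rfl
        intro i hi
        have hne : i ≠ μ := Finset.ne_of_mem_erase hi
        rw [Pi.single_eq_of_ne hne]
        ring
      have h2 : ((Pi.single μ 1 : Fin M → ℝ) μ - z μ) * (q μ - (Pi.single μ 1 : Fin M → ℝ) μ)
          = (1 - z μ) * (q μ - 1) := by simp
      have h3 : q μ - 1 = -(∑ i ∈ Finset.univ.erase μ, q i) := by linarith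
      rw [h1, h2, h3]
      have h4 : (1 - z μ) * (-(∑ i ∈ Finset.univ.erase μ, q i))
          = - ((∑ i ∈ Finset.univ.erase μ, q i) * (1 - z μ)) := by ring
      have h5 : ∑ i ∈ Finset.univ.erase μ, q i * (z μ - 1)
          = (∑ i ∈ Finset.univ.erase μ, q i) * (z μ - 1) := by
        rw [Finset.sum_mul]
      have h6 : 0 ≤ ∑ i ∈ Finset.univ.erase μ, q i * (z μ - 1 - z i) := by
        apply Finset.sum_nonneg
        intro i hi
        have hne : i ≠ μ := Finset.ne_of_mem_erase hi
        have := hmargin i hne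
        have := hpos i
        nlinarith
      have h7 : -((∑ i ∈ Finset.univ.erase μ, q i) * (1 - z μ))
          = (∑ i ∈ Finset.univ.erase μ, q i) * (z μ - 1) := by ring
      linarith [h4, h5, h6, h7]
    have expand : sqDist q z - sqDist (Pi.single μ 1) z
        - ∑ i, (q i - (Pi.single μ 1 : Fin M → ℝ) i) ^ 2
        = 2 * ∑ i, ((Pi.single μ 1 : Fin M → ℝ) i - z i) * (q i - (Pi.single μ 1 : Fin M → ℝ) i) := by
      simp only [sqDist, Finset.mul_sum, ← Finset.sum_sub_distrib]
      apply Finset.sum_congr rfl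
      intros; ring
    nlinarith [cross]
  ext p
  simp only [Set.mem_setOf_eq, Set.mem_singleton_iff]
  constructor
  · rintro ⟨hp, hmin⟩
    have h1 := hmin (Pi.single μ 1) hmem
    have h2 := key p hp
    have h3 : ∑ i, (p i - (Pi.single μ 1 : Fin M → ℝ) i) ^ 2 ≤ 0 := by linarith
    have h4 : ∀ i, (p i - (Pi.single μ 1 : Fin M → ℝ) i) ^ 2 = 0 := by
      intro i
      have := Finset.sum_nonneg (fun i (_ : i ∈ Finset.univ) => sq_nonneg (p i - (Pi.single μ 1 : Fin M → ℝ) i))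
      have hzero : ∑ i, (p i - (Pi.single μ 1 : Fin M → ℝ) i) ^ 2 = 0 := le_antisymm h3 this
      have := (Finset.sum_eq_zero_iff_of_nonneg
        (fun i _ => sq_nonneg (p i - (Pi.single μ 1 : Fin M → ℝ) i))).mp hzero i (Finset.mem_univ i)
      exact this
    funext i
    have := h4 i
    nlinarith [this, sq_nonneg (p i - (Pi.single μ 1 : Fin M → ℝ) i)]
  · rintro rfl
    exact ⟨hmem, fun q hq => le_trans (le_add_of_nonneg_right
      (Finset.sum_nonneg fun i _ => sq_nonneg _)) (key q hq)⟩
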